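/- Let G be a finite bipartite graph with bipartition (L, R) and let {α_v : v ∈ L} be real numbers in [0, 1]. There exists a probability distribution D over matchings of G such that the coverage probability D[v] ≥ α_v for all v ∈ L if and only if for every S ⊆ L one has |Γ(S)| ≥ Σ_{v∈S} α_v. -/

import Mathlib

/-!
A finite bipartite graph with bipartition `(L, R)` is modelled by its edge set
`E : Finset (L × R)`, where `L` and `R` are finite types.  A matching is a subset of `E`
in which no two distinct edges share an endpoint.  `nbhd E S` is the set `Γ(S)` of
neighbours in `R` of a set `S ⊆ L` of left vertices.  A distribution of matchings is a
nonnegative function on `Finset (L × R)`, supported on matchings, summing to `1`;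
`covP p u` is the probability that the left vertex `u` is covered by the random matching.
-/

variable {L R : Type*}

/-- `M` is a matching of the bipartite graph with edge set `E`. -/
def IsMatching [DecidableEq L] [DecidableEq R]
    (E M : Finset (L × R)) : Prop :=
  M ⊆ E ∧ ∀ e ∈ M, ∀ f ∈ M, e ≠ f → e.1 ≠ f.1 ∧ e.2 ≠ f.2

/-- The neighbourhood `Γ(S) ⊆ R` of a set `S ⊆ L` of left vertices. -/
def nbhd [DecidableEq L] [DecidableEq R] (E : Finset (L × R)) (S : Finset L) : Finset R :=
  (E.filter (fun e => e.1 ∈ S)).image Prod.snd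

/-- `p` is a probability distribution over the matchings of the graph with edge set `E`. -/
def IsDistribM [Fintype L] [Fintype R] [DecidableEq L] [DecidableEq R]
    (E : Finset (L × R)) (p : Finset (L × R) → ℝ) : Prop :=
  (∀ M, 0 ≤ p M) ∧ (∀ M, p M ≠ 0 → IsMatching E M) ∧ (∑ M : Finset (L × R), p M) = 1

/-- The coverage (satisfaction) probability of the left vertex `u` under the
distribution of matchings `p`. -/
def covP [Fintype L] [Fintype R] [DecidableEq L] [DecidableEq R]
    (p : Finset (L × R) → ℝ) (u : L) : ℝ :=
  ∑ M : Finset (L × R), if u ∈ M.image Prod.fst then p M else 0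

/-- `F` is a maxmin-fair distribution of matchings for the one-sided bipartite matching
problem (the users are the left vertices `L`). -/
def MaxminFairM [Fintype L] [Fintype R] [DecidableEq L] [DecidableEq R]
    (E : Finset (L × R)) (F : Finset (L × R) → ℝ) : Prop :=
  IsDistribM E F ∧
    ∀ D, IsDistribM E D → ∀ u : L, covP F u < covP D u →
      ∃ v : L, covP D v < covP F v ∧ covP F v ≤ covP F u


open Finset

section AuxRk
variable [DecidableEq L] [DecidableEq R]

set_option linter.unusedSectionVars false

lemma nbhd_mono (E : Finset (L × R)) {S T : Finset L} (h : S ⊆ T) : nbhd E S ⊆ nbhd E T := by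
  apply image_subset_image
  exact monotone_filter_right E (fun e _ he => h he)

lemma nbhd_empty (E : Finset (L × R)) : nbhd E (∅ : Finset L) = ∅ := by
  simp [nbhd]

lemma nbhd_union (E : Finset (L × R)) (S T : Finset L) :
    nbhd E (S ∪ T) = nbhd E S ∪ nbhd E T := by
  ext r
  simp only [nbhd, mem_image, mem_filter, mem_union]
  constructor
  · rintro ⟨e, ⟨he, hS | hT⟩, rfl⟩
    · exact Or.inl ⟨e, ⟨he, hS⟩, rfl⟩
    · exact Or.inr ⟨e, ⟨he, hT⟩, rfl⟩
  · rintro (⟨e, ⟨he, hS⟩, rfl⟩ | ⟨e, ⟨he, hT⟩, rfl⟩)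
    · exact ⟨e, ⟨he, Or.inl hS⟩, rfl⟩
    · exact ⟨e, ⟨he, Or.inr hT⟩, rfl⟩

lemma nbhd_inter_subset (E : Finset (L × R)) (S T : Finset L) :
    nbhd E (S ∩ T) ⊆ nbhd E S ∩ nbhd E T :=
  subset_inter (nbhd_mono E inter_subset_left) (nbhd_mono E inter_subset_right)

noncomputable def rk (E : Finset (L × R)) (S : Finset L) : ℕ :=
  S.powerset.inf' (powerset_nonempty S) fun T => (S \ T).card + (nbhd E T).card

lemma rk_le (E : Finset (L × R)) {S T : Finset L} (h : T ⊆ S) :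
    rk E S ≤ (S \ T).card + (nbhd E T).card :=
  inf'_le _ (mem_powerset.2 h)

lemma rk_exists (E : Finset (L × R)) (S : Finset L) :
    ∃ T, T ⊆ S ∧ rk E S = (S \ T).card + (nbhd E T).card := by
  obtain ⟨T, hT, h⟩ := exists_mem_eq_inf' (powerset_nonempty S)
    (fun T => (S \ T).card + (nbhd E T).card)
  exact ⟨T, mem_powerset.1 hT, h⟩

lemma rk_le_card (E : Finset (L × R)) (S : Finset L) : rk E S ≤ S.card := by
  have := rk_le E (empty_subset S)
  simpa [nbhd_empty] using this

lemma rk_empty (E : Finset (L × R)) : rk E (∅ : Finset L) = 0 :=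
  Nat.le_zero.1 (by simpa using rk_le_card E ∅)

lemma rk_mono (E : Finset (L × R)) {S S' : Finset L} (h : S ⊆ S') : rk E S ≤ rk E S' := by
  obtain ⟨T, hT, hEq⟩ := rk_exists E S'
  rw [hEq]
  calc rk E S ≤ (S \ (T ∩ S)).card + (nbhd E (T ∩ S)).card := rk_le E inter_subset_right
    _ ≤ (S' \ T).card + (nbhd E T).card := by
        refine add_le_add (card_le_card ?_) (card_le_card (nbhd_mono E inter_subset_left))
        intro x hx
        rw [mem_sdiff] at hx ⊢
        exact ⟨h hx.1, fun hxT => hx.2 (mem_inter.2 ⟨hxT, hx.1⟩)⟩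

lemma rk_insert_le (E : Finset (L × R)) (S : Finset L) (v : L) :
    rk E (insert v S) ≤ rk E S + 1 := by
  obtain ⟨T, hT, hEq⟩ := rk_exists E S
  calc rk E (insert v S) ≤ (insert v S \ T).card + (nbhd E T).card :=
        rk_le E (hT.trans (subset_insert v S))
    _ ≤ (S \ T).card + 1 + (nbhd E T).card := by
        refine add_le_add ?_ le_rfl
        calc (insert v S \ T).card ≤ (insert v (S \ T)).card :=
              card_le_card (by intro x; simp; tauto)
          _ ≤ (S \ T).card + 1 := card_insert_le _ _
    _ = rk E S + 1 + 0 := by rw [hEq]; ring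
    _ ≤ rk E S + 1 := by omega

lemma rk_submodular (E : Finset (L × R)) (X Y : Finset L) :
    rk E (X ∪ Y) + rk E (X ∩ Y) ≤ rk E X + rk E Y := by
  obtain ⟨A, hA, hAe⟩ := rk_exists E X
  obtain ⟨B, hB, hBe⟩ := rk_exists E Y
  have h1 : rk E (X ∪ Y) ≤ ((X ∪ Y) \ (A ∪ B)).card + (nbhd E (A ∪ B)).card :=
    rk_le E (union_subset_union hA hB)
  have h2 : rk E (X ∩ Y) ≤ ((X ∩ Y) \ (A ∩ B)).card + (nbhd E (A ∩ B)).card :=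
    rk_le E (inter_subset_inter hA hB)
  -- neighbourhood part
  have hn : (nbhd E (A ∪ B)).card + (nbhd E (A ∩ B)).card
      ≤ (nbhd E A).card + (nbhd E B).card := by
    have := card_union_add_card_inter (nbhd E A) (nbhd E B)
    have hle : (nbhd E (A ∩ B)).card ≤ (nbhd E A ∩ nbhd E B).card :=
      card_le_card (nbhd_inter_subset E A B)
    rw [nbhd_union]
    omega
  -- cardinality part
  have hc : ((X ∪ Y) \ (A ∪ B)).card + ((X ∩ Y) \ (A ∩ B)).card
      ≤ (X \ A).card + (Y \ B).card := by
    have e1 : ((X ∪ Y) \ (A ∪ B)).card + (A ∪ B).card = (X ∪ Y).card :=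
      card_sdiff_add_card_eq_card (union_subset_union hA hB)
    have e2 : ((X ∩ Y) \ (A ∩ B)).card + (A ∩ B).card = (X ∩ Y).card :=
      card_sdiff_add_card_eq_card (inter_subset_inter hA hB)
    have e3 : (X \ A).card + A.card = X.card := card_sdiff_add_card_eq_card hA
    have e4 : (Y \ B).card + B.card = Y.card := card_sdiff_add_card_eq_card hB
    have e5 := card_union_add_card_inter X Y
    have e6 := card_union_add_card_inter A B
    omega
  omega
/-- If the rank of `A` equals its cardinality, `A` can be covered by a matching. -/
lemma matchable (E : Finset (L × R)) {A : Finset L} (h : rk E A = A.card) :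
    ∃ M, IsMatching E M ∧ M.image Prod.fst = A := by
  have hall : ∀ T ⊆ A, T.card ≤ (nbhd E T).card := by
    intro T hT
    have h1 := rk_le E hT
    have h2 : (A \ T).card + T.card = A.card := card_sdiff_add_card_eq_card hT
    omega
  -- apply Mathlib's Hall theorem
  set t : {x // x ∈ A} → Finset R := fun v => (E.filter (fun e => e.1 = (v : L))).image Prod.snd
    with ht
  have key : ∀ s : Finset {x // x ∈ A}, s.card ≤ (s.biUnion t).card := by
    intro s
    have himg : s.biUnion t = nbhd E (s.image Subtype.val) := by
      ext r
      simp only [mem_biUnion, ht, mem_image, mem_filter, nbhd]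
      constructor
      · rintro ⟨v, hv, e, ⟨he, h1⟩, rfl⟩
        exact ⟨e, ⟨he, ⟨v, hv, h1.symm⟩⟩, rfl⟩
      · rintro ⟨e, ⟨he, v, hv, h1⟩, rfl⟩
        exact ⟨v, hv, e, ⟨he, h1.symm⟩, rfl⟩
    have hcard : s.card = (s.image Subtype.val).card :=
      (card_image_of_injective s Subtype.coe_injective).symm
    rw [himg, hcard]
    exact hall _ (by intro x hx; simp only [mem_image] at hx; obtain ⟨v, _, rfl⟩ := hx; exact v.2)
  obtain ⟨f, hfinj, hf⟩ := (Finset.all_card_le_biUnion_card_iff_exists_injective t).1 key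
  refine ⟨A.attach.image (fun (v : {x // x ∈ A}) => ((v : L), f v)), ⟨?_, ?_⟩, ?_⟩
  · intro e he
    simp only [mem_image, mem_attach, true_and] at he
    obtain ⟨v, rfl⟩ := he
    have := hf v
    simp only [ht, mem_image, mem_filter] at this
    obtain ⟨e', ⟨he', h1⟩, h2⟩ := this
    have : e' = ((v : L), f v) := Prod.ext h1 h2
    rwa [← this]
  · intro e he e' he' hne
    simp only [mem_image, mem_attach, true_and] at he he'
    obtain ⟨v, rfl⟩ := he
    obtain ⟨v', rfl⟩ := he'
    have hvv : v ≠ v' := fun h => hne (by rw [h])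
    constructor
    · exact fun h => hvv (Subtype.coe_injective h)
    · exact fun h => hvv (hfinj h)
  · rw [image_image]
    ext x
    simp only [mem_image, Function.comp, mem_attach, true_and]
    constructor
    · rintro ⟨v, rfl⟩; exact v.2
    · intro hx; exact ⟨⟨x, hx⟩, rfl⟩

/-- Hall condition implies the sum of `a` over `S` is at most the rank. -/
lemma sum_le_rk (E : Finset (L × R)) (a : L → ℝ) (ha : ∀ v, a v ∈ Set.Icc (0 : ℝ) 1)
    (hHall : ∀ S : Finset L, (∑ v ∈ S, a v) ≤ ((nbhd E S).card : ℝ)) (S : Finset L) :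
    (∑ v ∈ S, a v) ≤ (rk E S : ℝ) := by
  obtain ⟨T, hT, hEq⟩ := rk_exists E S
  have hsplit : (∑ v ∈ S, a v) = (∑ v ∈ S \ T, a v) + ∑ v ∈ T, a v :=
    (Finset.sum_sdiff hT).symm
  have h1 : (∑ v ∈ S \ T, a v) ≤ ((S \ T).card : ℝ) := by
    calc (∑ v ∈ S \ T, a v) ≤ ∑ _v ∈ S \ T, (1 : ℝ) :=
          Finset.sum_le_sum (fun v _ => (ha v).2)
      _ = ((S \ T).card : ℝ) := by simp
  have h2 := hHall T
  rw [hEq]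
  push_cast
  linarith

/-- Abel-summation type inequality. -/
lemma abel_ineq : ∀ (n : ℕ) (c x y : ℕ → ℝ),
    (∀ i j, i ≤ j → j < n → c j ≤ c i) → (∀ i, i < n → 0 ≤ c i) →
    (∀ k, k ≤ n → (∑ i ∈ Finset.range k, x i) ≤ ∑ i ∈ Finset.range k, y i) →
    (∑ i ∈ Finset.range n, c i * x i) ≤ ∑ i ∈ Finset.range n, c i * y i := by
  intro n
  induction n with
  | zero => intro c x y _ _ _; simp
  | succ n ih =>
    intro c x y hanti hpos hpre
    have split : ∀ z : ℕ → ℝ, (∑ i ∈ Finset.range (n+1), c i * z i)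
        = (∑ i ∈ Finset.range n, (c i - c n) * z i) + c n * ∑ i ∈ Finset.range (n+1), z i := by
      intro z
      calc (∑ i ∈ Finset.range (n+1), c i * z i)
          = ∑ i ∈ Finset.range (n+1), ((c i - c n) * z i + c n * z i) := by
            apply Finset.sum_congr rfl; intros; ring
        _ = (∑ i ∈ Finset.range (n+1), (c i - c n) * z i)
              + ∑ i ∈ Finset.range (n+1), c n * z i := Finset.sum_add_distrib
        _ = (∑ i ∈ Finset.range n, (c i - c n) * z i)
              + c n * ∑ i ∈ Finset.range (n+1), z i := by
            rw [Finset.sum_range_succ (fun i => (c i - c n) * z i), ← Finset.mul_sum]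
            simp
    rw [split x, split y]
    have h1 : (∑ i ∈ Finset.range n, (c i - c n) * x i)
        ≤ ∑ i ∈ Finset.range n, (c i - c n) * y i := by
      apply ih
      · intro i j hij hj
        have := hanti i j hij (by omega)
        linarith
      · intro i hi
        have := hanti i n (by omega) (by omega)
        linarith
      · intro k hk
        exact hpre k (by omega)
    have h2 : c n * (∑ i ∈ Finset.range (n+1), x i) ≤ c n * ∑ i ∈ Finset.range (n+1), y i :=
      mul_le_mul_of_nonneg_left (hpre (n+1) le_rfl) (hpos n (by omega))
    linarith

section WithFintype
variable [Fintype L]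

variable [Fintype L]

/-- The prefix set of the first `k` left vertices in the order given by `e`. -/
def chainS {n : ℕ} (e : Fin n ≃ L) (k : ℕ) : Finset L :=
  univ.filter (fun v => (e.symm v : ℕ) < k)

lemma chainS_zero {n : ℕ} (e : Fin n ≃ L) : chainS e 0 = ∅ := by
  simp [chainS]

lemma chainS_full {n : ℕ} (e : Fin n ≃ L) : chainS e n = univ := by
  ext v; simp [chainS, (e.symm v).2]

lemma chainS_not_mem {n : ℕ} (e : Fin n ≃ L) (k : ℕ) (hk : k < n) :
    e ⟨k, hk⟩ ∉ chainS e k := by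
  simp [chainS]

lemma chainS_succ {n : ℕ} (e : Fin n ≃ L) (k : ℕ) (hk : k < n) :
    chainS e (k + 1) = insert (e ⟨k, hk⟩) (chainS e k) := by
  ext v
  simp only [chainS, mem_filter, mem_univ, true_and, mem_insert]
  constructor
  · intro hv
    rcases Nat.lt_succ_iff_lt_or_eq.1 hv with h | h
    · exact Or.inr h
    · refine Or.inl ?_
      have h2 : e.symm v = ⟨k, hk⟩ := Fin.ext h
      rw [← h2, Equiv.apply_symm_apply]
  · rintro (rfl | hv)
    · simp
    · omega

lemma exists_antitone_equiv (w : L → ℝ) :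
    ∃ (n : ℕ) (e : Fin n ≃ L), ∀ i j : Fin n, i ≤ j → w (e j) ≤ w (e i) := by
  classical
  set e₀ : Fin (Fintype.card L) ≃ L := (Fintype.equivFin L).symm with he₀
  set σ := Tuple.sort (fun i => -(w (e₀ i))) with hσ
  refine ⟨Fintype.card L, σ.trans e₀, ?_⟩
  intro i j hij
  have h := Tuple.monotone_sort (fun i => -(w (e₀ i))) hij
  simp only [Function.comp_apply] at h
  have h1 : (σ.trans e₀) i = e₀ (σ i) := rfl
  have h2 : (σ.trans e₀) j = e₀ (σ j) := rfl
  rw [h1, h2]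
  linarith

/-- The greedy lemma: for nonnegative weights `w`, some matching `M` covers a set
of total weight at least `∑ v, w v * a v`. -/
lemma greedy (E : Finset (L × R)) (a w : L → ℝ)
    (ha : ∀ v, a v ∈ Set.Icc (0 : ℝ) 1)
    (hHall : ∀ S : Finset L, (∑ v ∈ S, a v) ≤ ((nbhd E S).card : ℝ))
    (hw : ∀ v, 0 ≤ w v) :
    ∃ M, IsMatching E M ∧ (∑ v, w v * a v) ≤ ∑ v ∈ M.image Prod.fst, w v := by
  classical
  obtain ⟨n, e, hanti⟩ := exists_antitone_equiv (L := L) w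
  set S : ℕ → Finset L := chainS e with hS
  set A : Finset L := univ.filter
    (fun v => rk E (S ((e.symm v : ℕ) + 1)) = rk E (S (e.symm v : ℕ)) + 1) with hA
  -- key induction
  have key : ∀ k, k ≤ n → rk E (S k) = (A ∩ S k).card ∧ rk E (A ∩ S k) = (A ∩ S k).card := by
    intro k
    induction k with
    | zero => intro _; simp [hS, chainS_zero, rk_empty]
    | succ k ihk =>
      intro hk1
      have hk : k < n := hk1
      obtain ⟨ih1, ih2⟩ := ihk (le_of_lt hk)
      set v := e ⟨k, hk⟩ with hv
      have hv1 : v ∉ S k := chainS_not_mem e k hk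
      have hv2 : S (k + 1) = insert v (S k) := chainS_succ e k hk
      have hsymm : (e.symm v : ℕ) = k := by rw [hv, Equiv.symm_apply_apply]
      have hAsub : A ∩ S k ⊆ S k := inter_subset_right
      by_cases hvA : v ∈ A
      · have hrk : rk E (S (k + 1)) = rk E (S k) + 1 := by
          have h := (mem_filter.1 hvA).2
          rwa [hsymm] at h
        have hvAS : v ∉ A ∩ S k := fun h => hv1 (mem_inter.1 h).2
        have hAint : A ∩ S (k + 1) = insert v (A ∩ S k) := by
          rw [hv2]
          ext x
          simp only [mem_inter, mem_insert]
          constructor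
          · rintro ⟨hxA, rfl | hxS⟩
            · exact Or.inl rfl
            · exact Or.inr ⟨hxA, hxS⟩
          · rintro (rfl | ⟨hxA, hxS⟩)
            · exact ⟨hvA, Or.inl rfl⟩
            · exact ⟨hxA, Or.inr hxS⟩
        have hsub := rk_submodular E (S k) (insert v (A ∩ S k))
        have hXuY : S k ∪ insert v (A ∩ S k) = S (k + 1) := by
          rw [hv2]
          ext x
          constructor
          · intro hx
            rcases mem_union.1 hx with h | h
            · exact mem_insert_of_mem h
            · rcases mem_insert.1 h with rfl | h
              · exact mem_insert_self _ _
              · exact mem_insert_of_mem (mem_inter.1 h).2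
          · intro hx
            rcases mem_insert.1 hx with rfl | h
            · exact mem_union_right _ (mem_insert_self _ _)
            · exact mem_union_left _ h
        have hXiY : S k ∩ insert v (A ∩ S k) = A ∩ S k := by
          ext x
          simp only [mem_inter, mem_insert]
          constructor
          · rintro ⟨hxS, rfl | ⟨hxA, hxS'⟩⟩
            · exact absurd hxS hv1
            · exact ⟨hxA, hxS⟩
          · rintro ⟨hxA, hxS⟩
            exact ⟨hxS, Or.inr ⟨hxA, hxS⟩⟩
        rw [hXuY, hXiY, hrk, ih2] at hsub
        have hle : rk E (insert v (A ∩ S k)) ≤ (insert v (A ∩ S k)).card := rk_le_card E _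
        have hcard : (insert v (A ∩ S k)).card = (A ∩ S k).card + 1 :=
          card_insert_of_notMem hvAS
        constructor
        · rw [hrk, ih1, hAint, hcard]
        · rw [hAint, hcard]
          omega
      · have hrk : rk E (S (k + 1)) = rk E (S k) := by
          have hne : rk E (S (k + 1)) ≠ rk E (S k) + 1 := by
            intro hcon
            exact hvA (mem_filter.2 ⟨mem_univ v, by rw [hsymm]; exact hcon⟩)
          have hle : rk E (S (k + 1)) ≤ rk E (S k) + 1 := by
            rw [hv2]; exact rk_insert_le E _ _
          have hge : rk E (S k) ≤ rk E (S (k + 1)) :=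
            rk_mono E (by rw [hv2]; exact subset_insert _ _)
          omega
        have hAint : A ∩ S (k + 1) = A ∩ S k := by
          rw [hv2]
          ext x
          simp only [mem_inter, mem_insert]
          constructor
          · rintro ⟨hxA, rfl | hxS⟩
            · exact absurd hxA hvA
            · exact ⟨hxA, hxS⟩
          · rintro ⟨hxA, hxS⟩
            exact ⟨hxA, Or.inr hxS⟩
        rw [hAint, hrk]
        exact ⟨ih1, ih2⟩
  -- extract the matching
  have hAn : A ∩ S n = A := by rw [hS, chainS_full]; exact inter_univ A
  obtain ⟨M, hM, hMA⟩ := matchable E (A := A) (by rw [← hAn]; exact (key n le_rfl).2)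
  refine ⟨M, hM, ?_⟩
  -- sums
  have hsum : ∀ (g : L → ℝ) (k : ℕ), k ≤ n →
      (∑ i ∈ Finset.range k, if h : i < n then g (e ⟨i, h⟩) else 0) = ∑ u ∈ S k, g u := by
    intro g k
    induction k with
    | zero => intro _; simp [hS, chainS_zero]
    | succ k ihk =>
      intro hk1
      have hk : k < n := hk1
      rw [Finset.sum_range_succ, ihk (le_of_lt hk), hS, chainS_succ e k hk,
        sum_insert (chainS_not_mem e k hk), dif_pos hk]
      ring
  set c : ℕ → ℝ := fun i => if h : i < n then w (e ⟨i, h⟩) else 0 with hc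
  set x : ℕ → ℝ := fun i => if h : i < n then a (e ⟨i, h⟩) else 0 with hx
  set y : ℕ → ℝ := fun i => if h : i < n then (if e ⟨i, h⟩ ∈ A then (1 : ℝ) else 0) else 0
    with hy
  have habel : (∑ i ∈ Finset.range n, c i * x i) ≤ ∑ i ∈ Finset.range n, c i * y i := by
    apply abel_ineq
    · intro i j hij hj
      rw [hc]
      simp only
      rw [dif_pos hj, dif_pos (lt_of_le_of_lt hij hj)]
      exact hanti ⟨i, _⟩ ⟨j, _⟩ hij
    · intro i hi
      rw [hc]; simp only
      rw [dif_pos hi]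
      exact hw _
    · intro k hk
      have h1 : (∑ i ∈ Finset.range k, x i) = ∑ u ∈ S k, a u := hsum a k hk
      have h2 : (∑ i ∈ Finset.range k, y i) = ∑ u ∈ S k, (if u ∈ A then (1 : ℝ) else 0) :=
        hsum (fun u => if u ∈ A then (1 : ℝ) else 0) k hk
      have h3 : (∑ u ∈ S k, (if u ∈ A then (1 : ℝ) else 0)) = ((A ∩ S k).card : ℝ) := by
        rw [Finset.sum_ite_mem]
        simp [Finset.inter_comm]
      rw [h1, h2, h3]
      calc (∑ u ∈ S k, a u) ≤ (rk E (S k) : ℝ) := sum_le_rk E a ha hHall (S k)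
        _ = ((A ∩ S k).card : ℝ) := by rw [(key k hk).1]
  have hlhs : (∑ i ∈ Finset.range n, c i * x i) = ∑ v, w v * a v := by
    have h0 : (∑ i ∈ Finset.range n, c i * x i)
        = ∑ i ∈ Finset.range n, (if h : i < n then w (e ⟨i, h⟩) * a (e ⟨i, h⟩) else 0) := by
      apply Finset.sum_congr rfl
      intro i hi
      have hi' : i < n := Finset.mem_range.1 hi
      rw [hc, hx]; simp only
      rw [dif_pos hi', dif_pos hi', dif_pos hi']
    rw [h0, hsum (fun v => w v * a v) n le_rfl, hS, chainS_full]
  have hrhs : (∑ i ∈ Finset.range n, c i * y i) = ∑ v ∈ A, w v := by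
    have h0 : (∑ i ∈ Finset.range n, c i * y i)
        = ∑ i ∈ Finset.range n,
            (if h : i < n then (if e ⟨i, h⟩ ∈ A then w (e ⟨i, h⟩) else 0) else 0) := by
      apply Finset.sum_congr rfl
      intro i hi
      have hi' : i < n := Finset.mem_range.1 hi
      rw [hc, hy]; simp only
      rw [dif_pos hi', dif_pos hi', dif_pos hi']
      by_cases hmem : e ⟨i, hi'⟩ ∈ A <;> simp [hmem]
    rw [h0, hsum (fun v => if v ∈ A then w v else 0) n le_rfl, hS, chainS_full]
    rw [Finset.sum_ite_mem]
    congr 1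
    exact univ_inter A
  rw [hlhs, hrhs] at habel
  rw [hMA]
  exact habel

end WithFintype
end AuxRk

section AuxMain
variable [Fintype L] [Fintype R] [DecidableEq L] [DecidableEq R]

/-- The coverage vector of a matching. -/
def covVec (M : Finset (L × R)) : L → ℝ := fun v => if v ∈ M.image Prod.fst then 1 else 0

/-- The covered part of `S` injects into the neighbourhood of `S`. -/
lemma cover_card_le {E M : Finset (L × R)} (hM : IsMatching E M) (S : Finset L) :
    (S ∩ M.image Prod.fst).card ≤ (nbhd E S).card := by
  classical
  rcases (S ∩ M.image Prod.fst).eq_empty_or_nonempty with h | h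
  · simp [h]
  obtain ⟨v₀, hv₀⟩ := h
  obtain ⟨e₀, he₀, _⟩ := mem_image.1 (mem_inter.1 hv₀).2
  set f : L → R := fun v => if h : ∃ e ∈ M, e.1 = v then h.choose.2 else e₀.2 with hf
  apply card_le_card_of_injOn f
  · intro v hv
    obtain ⟨hvS, hvM⟩ := mem_inter.1 hv
    obtain ⟨e, he, hev⟩ := mem_image.1 hvM
    have hex : ∃ e ∈ M, e.1 = v := ⟨e, he, hev⟩
    rw [hf]; simp only [dif_pos hex]
    obtain ⟨hc1, hc2⟩ := hex.choose_spec
    exact mem_image.2 ⟨hex.choose, mem_filter.2 ⟨hM.1 hc1, by rw [hc2]; exact hvS⟩, rfl⟩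
  · intro v1 h1 v2 h2 hfeq
    by_contra hne
    obtain ⟨e1', he1', hev1⟩ := mem_image.1 (mem_inter.1 h1).2
    obtain ⟨e2', he2', hev2⟩ := mem_image.1 (mem_inter.1 h2).2
    have hex1 : ∃ e ∈ M, e.1 = v1 := ⟨e1', he1', hev1⟩
    have hex2 : ∃ e ∈ M, e.1 = v2 := ⟨e2', he2', hev2⟩
    obtain ⟨hm1, hfst1⟩ := hex1.choose_spec
    obtain ⟨hm2, hfst2⟩ := hex2.choose_spec
    have hne' : hex1.choose ≠ hex2.choose := by
      intro hcon
      exact hne (by rw [← hfst1, ← hfst2, hcon])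
    have hsnd := (hM.2 _ hm1 _ hm2 hne').2
    rw [hf] at hfeq
    simp only [dif_pos hex1, dif_pos hex2] at hfeq
    exact hsnd hfeq

/-- Forward direction: a distribution's coverage satisfies Hall-type inequalities. -/
lemma covP_sum_le (E : Finset (L × R)) (p : Finset (L × R) → ℝ) (hp : IsDistribM E p)
    (S : Finset L) : (∑ v ∈ S, covP p v) ≤ ((nbhd E S).card : ℝ) := by
  classical
  obtain ⟨hpos, hsupp, hsum⟩ := hp
  have h1 : (∑ v ∈ S, covP p v)
      = ∑ M : Finset (L × R), ((S ∩ M.image Prod.fst).card : ℝ) * p M :=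
    calc (∑ v ∈ S, covP p v)
        = ∑ M : Finset (L × R), ∑ v ∈ S, (if v ∈ M.image Prod.fst then p M else 0) :=
          Finset.sum_comm
      _ = ∑ M : Finset (L × R), ((S ∩ M.image Prod.fst).card : ℝ) * p M := by
          apply Finset.sum_congr rfl
          intro M _
          rw [Finset.sum_ite_mem, Finset.sum_const, nsmul_eq_mul]
  rw [h1]
  calc (∑ M : Finset (L × R), ((S ∩ M.image Prod.fst).card : ℝ) * p M)
      ≤ ∑ M : Finset (L × R), ((nbhd E S).card : ℝ) * p M := by
        apply Finset.sum_le_sum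
        intro M _
        rcases eq_or_ne (p M) 0 with h | h
        · rw [h]; simp
        · apply mul_le_mul_of_nonneg_right _ (hpos M)
          exact_mod_cast cover_card_le (hsupp M h) S
    _ = ((nbhd E S).card : ℝ) := by rw [← Finset.mul_sum, hsum, mul_one]

/-- From a point of the convex hull of coverage vectors, build a distribution. -/
lemma distrib_of_hull (E : Finset (L × R)) (x : L → ℝ)
    (hx : x ∈ convexHull ℝ (covVec '' {M : Finset (L × R) | IsMatching E M})) :
    ∃ D, IsDistribM E D ∧ ∀ v, covP D v = x v := by
  classical
  rw [_root_.convexHull_eq] at hx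
  obtain ⟨ι, t, w, z, hw0, hw1, hz, hcm⟩ := hx
  set pick : ι → Finset (L × R) := fun i =>
    if h : ∃ M, IsMatching E M ∧ covVec M = z i then h.choose else ∅ with hpick
  have hpickP : ∀ i ∈ t, IsMatching E (pick i) ∧ covVec (pick i) = z i := by
    intro i hi
    obtain ⟨M, hM, hMz⟩ := hz i hi
    have hex : ∃ M, IsMatching E M ∧ covVec M = z i := ⟨M, hM, hMz⟩
    rw [hpick]; simp only [dif_pos hex]
    exact hex.choose_spec
  set D : Finset (L × R) → ℝ := fun M => ∑ i ∈ t.filter (fun i => pick i = M), w i with hD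
  have hDpos : ∀ M, 0 ≤ D M := by
    intro M
    apply Finset.sum_nonneg
    intro i hi
    exact hw0 i (Finset.mem_filter.1 hi).1
  have hDsupp : ∀ M, D M ≠ 0 → IsMatching E M := by
    intro M hne
    by_contra hcon
    apply hne
    rw [hD]
    apply Finset.sum_eq_zero
    intro i hi
    obtain ⟨hit, hieq⟩ := Finset.mem_filter.1 hi
    exact absurd (hieq ▸ (hpickP i hit).1) hcon
  have hDsum : (∑ M : Finset (L × R), D M) = 1 := by
    rw [hD]
    rw [Finset.sum_fiberwise_of_maps_to (fun i _ => Finset.mem_univ (pick i)) w]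
    exact hw1
  refine ⟨D, ⟨hDpos, hDsupp, hDsum⟩, ?_⟩
  intro v
  have hcov : covP D v = ∑ i ∈ t, (if v ∈ (pick i).image Prod.fst then w i else 0) := by
    rw [covP]
    rw [← Finset.sum_fiberwise_of_maps_to (fun i _ => Finset.mem_univ (pick i))
      (fun i => if v ∈ (pick i).image Prod.fst then w i else 0)]
    apply Finset.sum_congr rfl
    intro M _
    rw [hD]
    by_cases hmem : v ∈ M.image Prod.fst
    · rw [if_pos hmem]
      apply Finset.sum_congr rfl
      intro i hi
      rw [if_pos ((Finset.mem_filter.1 hi).2 ▸ hmem)]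
    · rw [if_neg hmem]
      symm
      apply Finset.sum_eq_zero
      intro i hi
      rw [if_neg ((Finset.mem_filter.1 hi).2 ▸ hmem)]
  have hx' : x v = ∑ i ∈ t, w i * z i v := by
    rw [← hcm, Finset.centerMass_eq_of_sum_1 _ _ hw1]
    rw [Finset.sum_apply]
    simp [Pi.smul_apply]
  rw [hcov, hx']
  apply Finset.sum_congr rfl
  intro i hi
  rw [← (hpickP i hi).2]
  rw [covVec]
  by_cases hmem : v ∈ (pick i).image Prod.fst
  · simp [hmem]
  · simp [hmem]

/-- Separation: the Hall condition puts `a` below the convex hull of coverage vectors. -/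
lemma exists_hull_ge (E : Finset (L × R)) (a : L → ℝ) (ha : ∀ v, a v ∈ Set.Icc (0 : ℝ) 1)
    (hHall : ∀ S : Finset L, (∑ v ∈ S, a v) ≤ ((nbhd E S).card : ℝ)) :
    ∃ x ∈ convexHull ℝ (covVec '' {M : Finset (L × R) | IsMatching E M}), ∀ v, a v ≤ x v := by
  classical
  set P : Set (L → ℝ) := convexHull ℝ (covVec '' {M : Finset (L × R) | IsMatching E M})
    with hPdef
  by_contra hcon
  push_neg at hcon
  set Q : Set (L → ℝ) := {x | ∀ v, a v ≤ x v} with hQdef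
  have hPconv : Convex ℝ P := convex_convexHull ℝ _
  have hPcomp : IsCompact P :=
    Set.Finite.isCompact_convexHull ℝ ((Set.toFinite _).image covVec)
  have hQconv : Convex ℝ Q := by
    intro x hx y hy s t hs ht hst
    intro v
    have := hx v
    have := hy v
    have : a v = s * a v + t * a v := by rw [← add_mul, hst, one_mul]
    rw [this]
    exact add_le_add (mul_le_mul_of_nonneg_left (hx v) hs)
      (mul_le_mul_of_nonneg_left (hy v) ht)
  have hQclosed : IsClosed Q := by
    have : Q = ⋂ v, (fun x : L → ℝ => x v) ⁻¹' (Set.Ici (a v)) := by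
      ext x; simp [hQdef, Set.mem_iInter]
    rw [this]
    exact isClosed_iInter (fun v => (isClosed_Ici).preimage (continuous_apply v))
  have hdisj : Disjoint P Q := by
    rw [Set.disjoint_left]
    intro x hxP hxQ
    obtain ⟨v, hv⟩ := hcon x hxP
    exact absurd (hxQ v) (not_le.2 hv)
  obtain ⟨f, u, v0, hfP, huv, hfQ⟩ :=
    geometric_hahn_banach_compact_closed hPconv hPcomp hQconv hQclosed hdisj
  set g : L → (L → ℝ) := fun k => fun j => if k = j then (1 : ℝ) else 0 with hg
  set wt : L → ℝ := fun k => f (g k) with hwt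
  have hfz : ∀ z : L → ℝ, f z = ∑ k, z k * wt k := by
    intro z
    conv_lhs => rw [pi_eq_sum_univ z]
    rw [map_sum]
    apply Finset.sum_congr rfl
    intro k _
    rw [map_smul, smul_eq_mul]
  have haQ : a ∈ Q := fun v => le_refl (a v)
  have hwt0 : ∀ k, 0 ≤ wt k := by
    intro k
    by_contra hneg
    push_neg at hneg
    set s : ℝ := (v0 - f a) / wt k with hs
    have hfa : v0 < f a := hfQ a haQ
    have hspos : 0 < s := div_pos_of_neg_of_neg (by linarith) hneg
    have hmem : a + s • g k ∈ Q := by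
      intro v
      simp only [Pi.add_apply, Pi.smul_apply, smul_eq_mul, hg]
      have : (0:ℝ) ≤ s * (if k = v then (1:ℝ) else 0) := by
        by_cases h : k = v <;> simp [h] <;> positivity
      linarith
    have hgk : f (g k) = wt k := rfl
    have hval : f (a + s • g k) = f a + s * wt k := by
      rw [map_add, map_smul, smul_eq_mul, hgk]
    have hsmul : s * wt k = v0 - f a := div_mul_cancel₀ _ (ne_of_lt hneg)
    have hQv := hfQ _ hmem
    rw [hval, hsmul] at hQv
    linarith
  obtain ⟨M, hM, hineq⟩ := greedy E a wt ha hHall hwt0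
  have hMP : covVec M ∈ P := subset_convexHull ℝ _ ⟨M, hM, rfl⟩
  have h1 : f (covVec M) = ∑ v ∈ M.image Prod.fst, wt v := by
    rw [hfz]
    calc (∑ k, covVec M k * wt k)
        = ∑ k, (if k ∈ M.image Prod.fst then wt k else 0) := by
          apply Finset.sum_congr rfl
          intro k _
          rw [covVec]
          by_cases h : k ∈ M.image Prod.fst <;> simp [h]
      _ = ∑ v ∈ M.image Prod.fst, wt v := by
          rw [Finset.sum_ite_mem, Finset.univ_inter]
  have h2 : f a = ∑ v, a v * wt v := hfz a
  have h3 : f a ≤ f (covVec M) := by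
    rw [h1, h2]
    calc (∑ v, a v * wt v) = ∑ v, wt v * a v := by
          apply Finset.sum_congr rfl; intros; ring
      _ ≤ ∑ v ∈ M.image Prod.fst, wt v := hineq
  have h4 : f (covVec M) < u := hfP _ hMP
  have h5 : v0 < f a := hfQ a haQ
  linarith

end AuxMain

/-- Generalized Hall theorem: for reals `α_v ∈ [0,1]`, there is a distribution `D` of
matchings of `G` with coverage probability `D[v] ≥ α_v` for every left vertex `v` if and
only if `|Γ(S)| ≥ ∑_{v ∈ S} α_v` for every `S ⊆ L`. -/
theorem exists_distrib_cov_ge_iff [Fintype L] [Fintype R] [DecidableEq L] [DecidableEq R]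
    (E : Finset (L × R)) (a : L → ℝ) (ha : ∀ v, a v ∈ Set.Icc (0 : ℝ) 1) :
    (∃ D, IsDistribM E D ∧ ∀ v : L, a v ≤ covP D v) ↔
      ∀ S : Finset L, (∑ v ∈ S, a v) ≤ ((nbhd E S).card : ℝ) := by
  constructor
  · rintro ⟨D, hD, hcov⟩ S
    calc (∑ v ∈ S, a v) ≤ ∑ v ∈ S, covP D v := Finset.sum_le_sum (fun v _ => hcov v)
      _ ≤ ((nbhd E S).card : ℝ) := covP_sum_le E D hD S
  · intro hHall
    obtain ⟨x, hxP, hax⟩ := exists_hull_ge E a ha hHall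
    obtain ⟨D, hD, hcov⟩ := distrib_of_hull E x hxP
    exact ⟨D, hD, fun v => le_of_le_of_eq (hax v) (hcov v).symm⟩
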